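/- One unit cell of MBQC with arbitrary measurement outcomes produces the byproduct operators T Z_i T†: for every N-qubit unitary T, every vector |ψ⟩ ∈ (ℂ²)^{⊗N}, and every outcome string m : Fin N → {0,1}, (√2)^N · ((⊗_{i=1}^{N} ⟨+| Z^{m_i}) ⊗ 1) · U_T · (|ψ⟩ ⊗ |+⟩^{⊗N}) = ( ∏_{i=1}^{N} (T Z_i T†)^{m_i} ) · T |ψ⟩, where (⊗_i ⟨+| Z^{m_i}) ⊗ 1 : (ℂ²)^{⊗N} ⊗ (ℂ²)^{⊗N} → (ℂ²)^{⊗N} contracts the input register with the product bra ⊗_i (⟨+| Z^{m_i}). -/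

import Mathlib

open Matrix Complex
open scoped Kronecker Classical

noncomputable section

namespace QCA

/-- Computational-basis index set of an `N`-qubit register. -/
abbrev QIdx (N : ℕ) := Fin N → Fin 2

/-- Operators (matrices) on an `N`-qubit register `(ℂ²)^{⊗N}`. -/
abbrev MatQ (N : ℕ) := Matrix (QIdx N) (QIdx N) ℂ

/-- Pauli X. -/
def Xg : Matrix (Fin 2) (Fin 2) ℂ := !![0, 1; 1, 0]

/-- Pauli Z. -/
def Zg : Matrix (Fin 2) (Fin 2) ℂ := !![1, 0; 0, -1]

/-- Pauli Y = i·X·Z. -/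
def Yg : Matrix (Fin 2) (Fin 2) ℂ := Complex.I • (Xg * Zg)

/-- Hadamard gate. -/
def Hg : Matrix (Fin 2) (Fin 2) ℂ := (Real.sqrt 2 : ℂ)⁻¹ • !![1, 1; 1, -1]

/-- Phase gate S = diag(1, i). -/
def Sg : Matrix (Fin 2) (Fin 2) ℂ := !![1, 0; 0, Complex.I]

/-- √X := H·S·H. -/
def sqrtXg : Matrix (Fin 2) (Fin 2) ℂ := Hg * Sg * Hg

/-- The ket |+⟩ = (|0⟩+|1⟩)/√2. -/
def ketPlus : Fin 2 → ℂ := fun _ => (Real.sqrt 2 : ℂ)⁻¹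

/-- The bra ⟨+|. -/
def braPlus : Fin 2 → ℂ := fun a => star (ketPlus a)

/-- The product state |+⟩^{⊗ι}. -/
def ketPlusAll (ι : Type*) [Fintype ι] : (ι → Fin 2) → ℂ := fun s => ∏ i, ketPlus (s i)

/-- Kronecker product of two vectors. -/
def kronVec {a b : Type*} (v : a → ℂ) (w : b → ℂ) : a × b → ℂ := fun p => v p.1 * w p.2

variable {ι : Type*} [Fintype ι] [DecidableEq ι]

/-- `op1 P i` acts as the one-qubit operator `P` on qubit `i` and as the identity elsewhere. -/
def op1 (P : Matrix (Fin 2) (Fin 2) ℂ) (i : ι) : Matrix (ι → Fin 2) (ι → Fin 2) ℂ :=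
  fun s t => P (s i) (t i) * ∏ j ∈ Finset.univ.erase i, (if s j = t j then (1 : ℂ) else 0)

/-- Controlled-Z gate between qubits `i` and `j` (identity elsewhere). -/
def cz2 (i j : ι) : Matrix (ι → Fin 2) (ι → Fin 2) ℂ :=
  Matrix.diagonal fun s => if s i = 1 ∧ s j = 1 then (-1 : ℂ) else 1

/-- The Z-rotation exp(iθ Z_i) on qubit `i`. -/
def rotZ (θ : ℝ) (i : ι) : Matrix (ι → Fin 2) (ι → Fin 2) ℂ :=
  NormedSpace.exp (((θ : ℂ) * Complex.I) • op1 Zg i)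

/-- The layer ∏_{i=1}^{N} H_i of Hadamards on every site of a ring of `N` qubits. -/
def hadamardLayer (N : ℕ) : MatQ N := (List.ofFn fun i : Fin N => op1 Hg i).prod

/-- The layer ∏_{i=1}^{N} CZ_{i,i+1} of controlled-Z gates on a ring of `N` qubits
(site indices mod `N`; the factors pairwise commute). -/
def czRing (N : ℕ) [NeZero N] : MatQ N := (List.ofFn fun i : Fin N => cz2 i (i + 1)).prod

/-- The layer ∏_{i=1}^{N} (√X)_i on a ring of `N` qubits. -/
def sqrtXLayer (N : ℕ) : MatQ N := (List.ofFn fun i : Fin N => op1 sqrtXg i).prod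

/-- The cluster CQCA T_c = (∏ H_i)·(∏ CZ_{i,i+1}) on a ring of `N` qubits. -/
def Tc (N : ℕ) [NeZero N] : MatQ N := hadamardLayer N * czRing N

/-- The periodic CQCA T̃_c = ∏ CZ_{i,i+1} on a ring of `N` qubits. -/
def Ttc (N : ℕ) [NeZero N] : MatQ N := czRing N

/-- The fractal CQCA T̂_c = (∏ H_i)·(∏ CZ_{i,i+1})·(∏ (√X)_i) on a ring of `N` qubits. -/
def Thc (N : ℕ) [NeZero N] : MatQ N := hadamardLayer N * czRing N * sqrtXLayer N

/-- Controlled-Z between input qubit `i` and output qubit `i` on a doubled register. -/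
def czIO {N : ℕ} (i : Fin N) : Matrix (QIdx N × QIdx N) (QIdx N × QIdx N) ℂ :=
  Matrix.diagonal fun p => if p.1 i = 1 ∧ p.2 i = 1 then (-1 : ℂ) else 1

/-- The unitary U_T = (1 ⊗ T)·(∏_i H_i^{(out)})·(∏_i CZ_{i,i}^{(in,out)}) of Eq. (16). -/
def UT {N : ℕ} (T : MatQ N) : Matrix (QIdx N × QIdx N) (QIdx N × QIdx N) ℂ :=
  ((1 : MatQ N) ⊗ₖ T) *
    (List.ofFn fun i : Fin N => (1 : MatQ N) ⊗ₖ op1 Hg i).prod *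
    (List.ofFn fun i : Fin N => czIO i).prod

/-- Contraction of the input register with the product bra `⊗_i bra i`. -/
def contractIn {N : ℕ} (bra : Fin N → Fin 2 → ℂ) (v : QIdx N × QIdx N → ℂ) : QIdx N → ℂ :=
  fun t => ∑ s : QIdx N, (∏ i, bra i (s i)) * v (s, t)

lemma diagonal_commute {α : Type*} [Fintype α] [DecidableEq α] (d e : α → ℂ) :
    Commute (Matrix.diagonal d) (Matrix.diagonal e) := by
  unfold Commute SemiconjBy
  have h : (fun i => d i * e i) = fun i => e i * d i := by funext x; ring
  rw [Matrix.diagonal_mul_diagonal, Matrix.diagonal_mul_diagonal, h]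

lemma Zg_eq_diagonal : Zg = Matrix.diagonal ![1, -1] := by
  ext i j
  fin_cases i <;> fin_cases j <;> simp [Zg, Matrix.diagonal]

lemma op1_diagonal (d : Fin 2 → ℂ) (i : ι) :
    op1 (Matrix.diagonal d) i = Matrix.diagonal (fun s => d (s i)) := by
  ext s t
  by_cases h : s = t
  · subst h
    simp [op1, Matrix.diagonal_apply_eq]
  · rw [Matrix.diagonal_apply_ne _ h]
    by_cases hi : s i = t i
    · obtain ⟨k, hk⟩ : ∃ k, s k ≠ t k := Function.ne_iff.mp h
      have hki : k ≠ i := by rintro rfl; exact hk hi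
      have h0 : (if s k = t k then (1 : ℂ) else 0) = 0 := by simp [hk]
      unfold op1
      rw [Finset.prod_eq_zero (Finset.mem_erase.mpr ⟨hki, Finset.mem_univ k⟩) h0]
      ring
    · unfold op1
      rw [Matrix.diagonal_apply_ne _ hi]
      ring

/-- The controlled-Z gate attached to an (undirected) edge `e`. -/
def czEdge {N : ℕ} (e : Sym2 (Fin N)) : MatQ N :=
  Matrix.diagonal fun s => if ∀ i ∈ e, s i = 1 then (-1 : ℂ) else 1

/-- The unitary ∏_{{i,j} ∈ E(G)} CZ_{i,j} preparing the graph state (the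
factors pairwise commute, so the product over the edge set is well defined). -/
def graphUnitary {N : ℕ} (G : SimpleGraph (Fin N)) [DecidableRel G.Adj] : MatQ N :=
  G.edgeFinset.noncommProd czEdge (by intro a _ b _ _; exact diagonal_commute _ _)

/-- The graph state |G⟩ = (∏_{{i,j} ∈ E(G)} CZ_{i,j}) |+⟩^{⊗N}. -/
def graphState {N : ℕ} (G : SimpleGraph (Fin N)) [DecidableRel G.Adj] : QIdx N → ℂ :=
  (graphUnitary G).mulVec (ketPlusAll (Fin N))

/-- The stabilizer generator K_v = X_v · ∏_{w ∈ N_G(v)} Z_w of the graph state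
(the Z factors pairwise commute, so the product is well defined). -/
def stabGen {N : ℕ} (G : SimpleGraph (Fin N)) [DecidableRel G.Adj] (v : Fin N) : MatQ N :=
  op1 Xg v *
    (G.neighborFinset v).noncommProd (fun w => op1 Zg w)
      (by
        intro a _ b _ _
        simp only [Function.onFun]
        rw [Zg_eq_diagonal, op1_diagonal, op1_diagonal]
        exact diagonal_commute _ _)


section MyAux

set_option linter.unusedSectionVars false

variable {ι : Type*} [Fintype ι] [DecidableEq ι]

/-- Auxiliary: the full tensor product of one-qubit operators. -/
def tensorAll (P : ι → Matrix (Fin 2) (Fin 2) ℂ) : Matrix (ι → Fin 2) (ι → Fin 2) ℂ :=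
  fun s t => ∏ i, P i (s i) (t i)

lemma tensorAll_one : tensorAll (fun _ : ι => (1 : Matrix (Fin 2) (Fin 2) ℂ)) = 1 := by
  ext s t
  simp only [tensorAll, Matrix.one_apply]
  by_cases h : s = t
  · subst h; simp
  · rw [if_neg h]
    obtain ⟨k, hk⟩ := Function.ne_iff.mp h
    exact Finset.prod_eq_zero (Finset.mem_univ k) (by simp [hk])

lemma tensorAll_mul (P Q : ι → Matrix (Fin 2) (Fin 2) ℂ) :
    tensorAll P * tensorAll Q = tensorAll (fun i => P i * Q i) := by
  ext s t
  simp only [Matrix.mul_apply, tensorAll]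
  have : ∀ u : ι → Fin 2, (∏ i, P i (s i) (u i)) * ∏ i, Q i (u i) (t i)
      = ∏ i, (P i (s i) (u i) * Q i (u i) (t i)) := fun u => Finset.prod_mul_distrib.symm
  simp only [this]
  rw [Finset.prod_univ_sum, Fintype.piFinset_univ]

lemma op1_eq_tensorAll (P : Matrix (Fin 2) (Fin 2) ℂ) (i : ι) :
    op1 P i = tensorAll (fun j => if j = i then P else 1) := by
  ext s t
  simp only [op1, tensorAll]
  have h : (∏ j, (if j = i then P else 1) (s j) (t j))
      = (if i = i then P else (1 : Matrix (Fin 2) (Fin 2) ℂ)) (s i) (t i) *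
        ∏ j ∈ Finset.univ.erase i, (if j = i then P else 1) (s j) (t j) :=
    (Finset.mul_prod_erase Finset.univ _ (Finset.mem_univ i)).symm
  rw [h, if_pos rfl]
  congr 1
  refine Finset.prod_congr rfl fun j hj => ?_
  rw [if_neg (Finset.mem_erase.mp hj).1, Matrix.one_apply]

lemma list_prod_ite {M : Type*} [Monoid M] (l : List ι) (hl : l.Nodup) (j : ι) (A : ι → M) :
    (l.map fun i => if j = i then A i else 1).prod = if j ∈ l then A j else 1 := by
  induction l with
  | nil => simp
  | cons a l ih =>
    rcases List.nodup_cons.mp hl with ⟨ha, hl'⟩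
    simp only [List.map_cons, List.prod_cons, ih hl', List.mem_cons]
    by_cases h : j = a
    · subst h
      simp [ha]
    · simp [h]

lemma prod_map_op1 (P : ι → Matrix (Fin 2) (Fin 2) ℂ) (l : List ι) :
    (l.map fun i => op1 (P i) i).prod
      = tensorAll (fun j => ((l.map fun i => if j = i then P i else 1)).prod) := by
  induction l with
  | nil => simp [tensorAll_one.symm]
  | cons a l ih =>
    rw [List.map_cons, List.prod_cons, ih, op1_eq_tensorAll, tensorAll_mul]
    refine congrArg tensorAll (funext fun j => ?_)
    rw [List.map_cons, List.prod_cons]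

lemma ofFn_prod_op1 {N : ℕ} (P : Fin N → Matrix (Fin 2) (Fin 2) ℂ) :
    (List.ofFn fun i => op1 (P i) i).prod = tensorAll P := by
  rw [List.ofFn_eq_map, prod_map_op1]
  refine congrArg tensorAll (funext fun j => ?_)
  rw [list_prod_ite _ (List.nodup_finRange N) j]
  simp

lemma ofFn_prod_diagonal {α : Type*} [Fintype α] [DecidableEq α] {N : ℕ}
    (d : Fin N → α → ℂ) :
    (List.ofFn fun i => Matrix.diagonal (d i)).prod
      = Matrix.diagonal (fun a => ∏ i, d i a) := by
  induction N with
  | zero => simp [← Matrix.diagonal_one]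
  | succ n ih =>
    rw [List.ofFn_succ, List.prod_cons, ih, Matrix.diagonal_mul_diagonal]
    refine congrArg Matrix.diagonal (funext fun a => ?_)
    rw [Fin.prod_univ_succ]

lemma ofFn_prod_kron_one {N n : ℕ} (f : Fin n → MatQ N) :
    (List.ofFn fun i => (1 : MatQ N) ⊗ₖ f i).prod = (1 : MatQ N) ⊗ₖ (List.ofFn f).prod := by
  induction n with
  | zero => simp [Matrix.one_kronecker_one]
  | succ k ih =>
    rw [List.ofFn_succ, List.prod_cons, List.ofFn_succ, List.prod_cons, ih _,
      ← Matrix.mul_kronecker_mul, one_mul]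

lemma conj_pow {α : Type*} [Fintype α] [DecidableEq α] (T A : Matrix α α ℂ)
    (h1 : Tᴴ * T = 1) (h2 : T * Tᴴ = 1) (k : ℕ) :
    (T * A * Tᴴ) ^ k = T * A ^ k * Tᴴ := by
  induction k with
  | zero => simp [h2]
  | succ k ih =>
    rw [pow_succ, pow_succ, ih, Matrix.mul_assoc (T * A ^ k) Tᴴ (T * A * Tᴴ),
      ← Matrix.mul_assoc Tᴴ (T * A) Tᴴ, ← Matrix.mul_assoc Tᴴ T A, h1, one_mul,
      ← Matrix.mul_assoc, Matrix.mul_assoc T (A ^ k) A]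

lemma prod_map_conj {α : Type*} [Fintype α] [DecidableEq α] (T : Matrix α α ℂ)
    (h1 : Tᴴ * T = 1) (h2 : T * Tᴴ = 1) (l : List (Matrix α α ℂ)) :
    (l.map fun A => T * A * Tᴴ).prod = T * l.prod * Tᴴ := by
  induction l with
  | nil => simp [h2]
  | cons a l ih =>
    rw [List.map_cons, List.prod_cons, ih, List.prod_cons,
      Matrix.mul_assoc (T * a) Tᴴ (T * l.prod * Tᴴ),
      ← Matrix.mul_assoc Tᴴ (T * l.prod) Tᴴ, ← Matrix.mul_assoc Tᴴ T l.prod, h1, one_mul,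
      ← Matrix.mul_assoc, Matrix.mul_assoc T a l.prod]

lemma sqrt2_sq : (Real.sqrt 2 : ℂ) * (Real.sqrt 2 : ℂ) = 2 := by
  norm_cast
  rw [Real.mul_self_sqrt (by norm_num)]

lemma sqrt2_ne_zero : (Real.sqrt 2 : ℂ) ≠ 0 := by
  intro h
  have := sqrt2_sq
  rw [h, mul_zero] at this
  norm_num at this

lemma Hg_apply (a b : Fin 2) :
    Hg a b = (Real.sqrt 2 : ℂ)⁻¹ * (if a = 1 ∧ b = 1 then (-1 : ℂ) else 1) := by
  fin_cases a <;> fin_cases b <;> simp [Hg]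

lemma Hg_symm (a b : Fin 2) : Hg a b = Hg b a := by
  fin_cases a <;> fin_cases b <;> simp [Hg]

lemma Hg_mul_Hg : Hg * Hg = 1 := by
  have hM : (!![1,1;1,-1] : Matrix (Fin 2) (Fin 2) ℂ) * !![1,1;1,-1] = (2 : ℂ) • 1 := by
    ext a b
    fin_cases a <;> fin_cases b <;>
      norm_num [Matrix.mul_apply, Fin.sum_univ_two, Matrix.one_apply]
  unfold Hg
  rw [Matrix.smul_mul, Matrix.mul_smul, hM, smul_smul, smul_smul]
  rw [show ((Real.sqrt 2 : ℂ)⁻¹ * (Real.sqrt 2 : ℂ)⁻¹ * 2) = 1 by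
    field_simp [sqrt2_ne_zero]
    rw [← sqrt2_sq]; ring]
  rw [one_smul]

end MyAux

/-- one unit cell of MBQC with outcomes `m` produces the byproducts
`T Z_i T†`: `(√2)^N ((⊗_i ⟨+|Z^{m_i}) ⊗ 1) U_T (|ψ⟩ ⊗ |+⟩^{⊗N}) = (∏_i (TZ_iT†)^{m_i}) T|ψ⟩`. -/
theorem mbqc_unit_cell_byproducts {N : ℕ} (T : MatQ N)
    (hT : T ∈ Matrix.unitaryGroup (QIdx N) ℂ) (ψ : QIdx N → ℂ) (m : Fin N → Fin 2) :
    ((Real.sqrt 2 : ℂ) ^ N) •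
        contractIn (fun i => Matrix.vecMul braPlus (Zg ^ (m i : ℕ)))
          ((UT T).mulVec (kronVec ψ (ketPlusAll (Fin N)))) =
      ((List.ofFn fun i : Fin N => (T * op1 Zg i * Tᴴ) ^ (m i : ℕ)).prod).mulVec
        (T.mulVec ψ) := by
  obtain ⟨h1, h2⟩ := Unitary.mem_iff.mp hT
  rw [Matrix.star_eq_conjTranspose] at h1 h2
  -- Right-hand side: collapse the byproduct product to T * diagonal * Tᴴ
  have hZpow : ∀ i : Fin N, (T * op1 Zg i * Tᴴ) ^ (m i : ℕ)
      = T * Matrix.diagonal (fun s : QIdx N => (![1, -1] : Fin 2 → ℂ) (s i) ^ (m i : ℕ)) * Tᴴ := by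
    intro i
    rw [Zg_eq_diagonal, op1_diagonal, conj_pow T _ h1 h2, Matrix.diagonal_pow]
    rfl
  have hlist : (List.ofFn fun i : Fin N => (T * op1 Zg i * Tᴴ) ^ (m i : ℕ))
      = (List.ofFn fun i : Fin N =>
          Matrix.diagonal (fun s : QIdx N => (![1, -1] : Fin 2 → ℂ) (s i) ^ (m i : ℕ))).map
          (fun A => T * A * Tᴴ) := by
    rw [List.map_ofFn]
    exact congrArg List.ofFn (funext fun i => hZpow i)
  have hR : (List.ofFn fun i : Fin N => (T * op1 Zg i * Tᴴ) ^ (m i : ℕ)).prod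
      = T * Matrix.diagonal
          (fun s : QIdx N => ∏ i, (![1, -1] : Fin 2 → ℂ) (s i) ^ (m i : ℕ)) * Tᴴ := by
    rw [hlist, prod_map_conj T h1 h2, ofFn_prod_diagonal]
  -- The Hadamard layer on the output register
  have hsym : ∀ a b : QIdx N, tensorAll (fun _ : Fin N => Hg) a b
      = tensorAll (fun _ : Fin N => Hg) b a := fun a b =>
    Finset.prod_congr rfl fun i _ => Hg_symm _ _
  have hHallHall : tensorAll (fun _ : Fin N => Hg) * tensorAll (fun _ : Fin N => Hg)
      = (1 : MatQ N) := by
    rw [tensorAll_mul, show (fun i : Fin N => Hg * Hg) = fun _ : Fin N => (1 : Matrix (Fin 2) (Fin 2) ℂ)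
      from funext fun _ => Hg_mul_Hg, tensorAll_one]
  -- Structure of U_T
  have hUT : UT T = ((1 : MatQ N) ⊗ₖ T) * ((1 : MatQ N) ⊗ₖ tensorAll (fun _ : Fin N => Hg)) *
      Matrix.diagonal (fun p : QIdx N × QIdx N =>
        ∏ i, if p.1 i = 1 ∧ p.2 i = 1 then (-1 : ℂ) else 1) := by
    unfold UT
    congr 1
    · congr 1
      rw [ofFn_prod_kron_one (fun i : Fin N => op1 Hg i), ofFn_prod_op1]
    · simp only [czIO]
      rw [ofFn_prod_diagonal]
  -- Action of the CZ layer on the initial state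
  have hw : Matrix.diagonal (fun p : QIdx N × QIdx N =>
        ∏ i, if p.1 i = 1 ∧ p.2 i = 1 then (-1 : ℂ) else 1) *ᵥ
        kronVec ψ (ketPlusAll (Fin N))
      = fun p => ψ p.1 * tensorAll (fun _ : Fin N => Hg) p.1 p.2 := by
    funext p
    rw [Matrix.mulVec_diagonal]
    have hH : tensorAll (fun _ : Fin N => Hg) p.1 p.2
        = (∏ i, if p.1 i = 1 ∧ p.2 i = 1 then (-1 : ℂ) else 1) *
          ∏ _i : Fin N, (Real.sqrt 2 : ℂ)⁻¹ := by
      show (∏ i, Hg (p.1 i) (p.2 i)) = _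
      simp only [Hg_apply]
      rw [Finset.prod_mul_distrib, mul_comm]
    rw [hH]
    simp only [kronVec, ketPlusAll, ketPlus]
    ring
  -- The full evolution
  have hv : (UT T) *ᵥ kronVec ψ (ketPlusAll (Fin N)) = fun p => ψ p.1 * T p.2 p.1 := by
    rw [hUT, ← Matrix.mul_kronecker_mul, Matrix.one_mul, ← Matrix.mulVec_mulVec, hw]
    funext p
    obtain ⟨s, t⟩ := p
    show (∑ q : QIdx N × QIdx N,
        ((1 : MatQ N) ⊗ₖ (T * tensorAll fun _ : Fin N => Hg)) (s, t) q *
          (ψ q.1 * tensorAll (fun _ : Fin N => Hg) q.1 q.2)) = ψ s * T t s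
    rw [Fintype.sum_prod_type]
    rw [Finset.sum_eq_single s]
    · simp only [Matrix.kroneckerMap_apply, Matrix.one_apply_eq, one_mul]
      have hT' : T t s = ((T * tensorAll fun _ : Fin N => Hg) *
          tensorAll fun _ : Fin N => Hg) t s := by
        rw [Matrix.mul_assoc, hHallHall, Matrix.mul_one]
      rw [hT', Matrix.mul_apply, Finset.mul_sum]
      refine Finset.sum_congr rfl fun t' _ => ?_
      rw [hsym s t']
      ring
    · intro b _ hb
      simp [Matrix.kroneckerMap_apply, Matrix.one_apply_ne (Ne.symm hb)]
    · intro h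
      exact absurd (Finset.mem_univ s) h
  -- The measurement bras
  have hbra : ∀ (i : Fin N) (a : Fin 2), Matrix.vecMul braPlus (Zg ^ (m i : ℕ)) a
      = (Real.sqrt 2 : ℂ)⁻¹ * (![1, -1] : Fin 2 → ℂ) a ^ (m i : ℕ) := by
    intro i a
    rw [Zg_eq_diagonal, Matrix.diagonal_pow, Matrix.vecMul_diagonal]
    have : braPlus a = (Real.sqrt 2 : ℂ)⁻¹ := by
      simp [braPlus, ketPlus, ← Complex.ofReal_inv, Complex.conj_ofReal]
    rw [this, Pi.pow_apply]
  -- Put everything together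
  rw [hR, Matrix.mulVec_mulVec, Matrix.mul_assoc (T * Matrix.diagonal _) Tᴴ T, h1,
    Matrix.mul_one, hv]
  funext t
  simp only [Pi.smul_apply, smul_eq_mul, contractIn]
  simp only [hbra]
  have hsq : (Real.sqrt 2 : ℂ) ^ N * ((Real.sqrt 2 : ℂ)⁻¹) ^ N = 1 := by
    rw [← mul_pow, mul_inv_cancel₀ sqrt2_ne_zero, one_pow]
  rw [show ((T * Matrix.diagonal
      (fun s : QIdx N => ∏ i, (![1, -1] : Fin 2 → ℂ) (s i) ^ (m i : ℕ))) *ᵥ ψ) t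
      = ∑ s : QIdx N, T t s * (∏ i, (![1, -1] : Fin 2 → ℂ) (s i) ^ (m i : ℕ)) * ψ s from
    Finset.sum_congr rfl fun s _ => by simp [Matrix.mul_diagonal]]
  rw [Finset.mul_sum]
  refine Finset.sum_congr rfl fun s _ => ?_
  rw [Finset.prod_mul_distrib, Finset.prod_const, Finset.card_univ, Fintype.card_fin]
  linear_combination ((∏ i, (![1, -1] : Fin 2 → ℂ) (s i) ^ (m i : ℕ)) * ψ s * T t s) * hsq

end QCA

end
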